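/- Let K ⊆ ℝ^n be a convex body, φ: K → (0,∞) continuous, θ ∈ S^{n-1}, and 0 < δ < ∫_K φ. Let H⁺(θ,δ) be the half-space {x : ⟨x,θ⟩ ≥ d} with d chosen so that ∫_{K∩H⁺} φ = δ. Then the support function of the weighted Ulam floating body M_δ(K,φ) satisfies h_{M_δ(K,φ)}(θ) = (1/δ)∫_{K∩H⁺(θ,δ)} ⟨θ,y⟩ φ(y) dy, and the weighted barycenter x(θ,δ) = (1/δ)∫_{K∩H⁺(θ,δ)} y φ(y) dy is the unique point of ∂M_δ(K,φ) with outer normal θ; in particular M_δ(K,φ) is strictly convex. -/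

import Mathlib

open MeasureTheory Metric Set
open scoped RealInnerProductSpace ENNReal Topology Pointwise

noncomputable def metronoid {n : ℕ} (μ : Measure (EuclideanSpace ℝ (Fin n))) :
    Set (EuclideanSpace ℝ (Fin n)) :=
  {z | ∃ f : EuclideanSpace ℝ (Fin n) → ℝ,
    (∀ y, 0 ≤ f y ∧ f y ≤ 1) ∧ Integrable f μ ∧ (∫ y, f y ∂μ) = 1 ∧
    Integrable (fun y => f y • y) μ ∧ z = ∫ y, f y • y ∂μ}

/-- The weighted Ulam floating body `M_δ(K, φ)`: the metronoid of the measure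
with density `φ·𝟙_K/δ`. -/
noncomputable def ulamW {n : ℕ} (K : Set (EuclideanSpace ℝ (Fin n)))
    (φ : EuclideanSpace ℝ (Fin n) → ℝ) (δ : ℝ) : Set (EuclideanSpace ℝ (Fin n)) :=
  metronoid ((volume.restrict K).withDensity fun x => ENNReal.ofReal (φ x / δ))

open scoped NNReal

variable {n : ℕ}

lemma uw_hyperplane_null (u : EuclideanSpace ℝ (Fin n)) (hu : u ≠ 0) (c : ℝ) :
    volume {y : EuclideanSpace ℝ (Fin n) | ⟪y, u⟫ = c} = 0 := by
  set W : Submodule ℝ (EuclideanSpace ℝ (Fin n)) := LinearMap.ker ((innerSL ℝ u).toLinearMap) with hW_def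
  have hW : W ≠ ⊤ := by
    intro h
    have hu' : u ∈ W := h ▸ Submodule.mem_top
    rw [hW_def, LinearMap.mem_ker] at hu'
    simp only [ContinuousLinearMap.coe_coe, innerSL_apply_apply, real_inner_self_eq_norm_sq] at hu'
    exact hu (by simpa using norm_eq_zero.mp (by nlinarith [norm_nonneg u]))
  set y₀ : EuclideanSpace ℝ (Fin n) := (c / ‖u‖ ^ 2) • u with hy₀_def
  have hy₀ : ⟪u, y₀⟫ = c := by
    rw [hy₀_def, real_inner_smul_right, real_inner_self_eq_norm_sq]
    rw [div_mul_eq_mul_div, mul_div_assoc, div_self (pow_ne_zero 2 (norm_ne_zero_iff.mpr hu)), mul_one]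
  have hset : {y : EuclideanSpace ℝ (Fin n) | ⟪y, u⟫ = c} = (fun y => y + (-y₀)) ⁻¹' (W : Set (EuclideanSpace ℝ (Fin n))) := by
    ext y
    simp only [mem_setOf_eq, mem_preimage, SetLike.mem_coe, hW_def, LinearMap.mem_ker,
      ContinuousLinearMap.coe_coe, innerSL_apply_apply, inner_add_right, inner_neg_right, hy₀]
    rw [real_inner_comm y u]
    constructor <;> intro h <;> linarith
  rw [hset, measure_preimage_add_right]
  exact Measure.addHaar_submodule volume W hW

section Helpers

variable {K : Set (EuclideanSpace ℝ (Fin n))} {φ : EuclideanSpace ℝ (Fin n) → ℝ} {δ : ℝ}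

lemma uw_integrable_iff {G : Type*} [NormedAddCommGroup G] [NormedSpace ℝ G]
    (hKm : MeasurableSet K) (hφae : AEMeasurable φ (volume.restrict K))
    (hφnn : ∀ x ∈ K, 0 ≤ φ x) (hδ0 : 0 < δ) (g : EuclideanSpace ℝ (Fin n) → G) :
    Integrable g ((volume.restrict K).withDensity fun x => ENNReal.ofReal (φ x / δ)) ↔
      IntegrableOn (fun y => (φ y / δ) • g y) K := by
  have hwae : AEMeasurable (fun x => Real.toNNReal (φ x / δ)) (volume.restrict K) :=
    (hφae.div_const δ).real_toNNReal
  have h1 : (fun x => ENNReal.ofReal (φ x / δ)) =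
      fun x => ((Real.toNNReal (φ x / δ) : ℝ≥0) : ℝ≥0∞) := rfl
  rw [h1, integrable_withDensity_iff_integrable_coe_smul₀ hwae]
  refine integrable_congr ?_
  filter_upwards [ae_restrict_mem hKm] with y hy
  rw [Real.coe_toNNReal _ (div_nonneg (hφnn y hy) hδ0.le)]

lemma uw_integral_eq {G : Type*} [NormedAddCommGroup G] [NormedSpace ℝ G]
    (hKm : MeasurableSet K) (hφae : AEMeasurable φ (volume.restrict K))
    (hφnn : ∀ x ∈ K, 0 ≤ φ x) (hδ0 : 0 < δ) (g : EuclideanSpace ℝ (Fin n) → G) :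
    (∫ y, g y ∂((volume.restrict K).withDensity fun x => ENNReal.ofReal (φ x / δ))) =
      ∫ y in K, (φ y / δ) • g y := by
  have hwae : AEMeasurable (fun x => Real.toNNReal (φ x / δ)) (volume.restrict K) :=
    (hφae.div_const δ).real_toNNReal
  have h1 : (fun x => ENNReal.ofReal (φ x / δ)) =
      fun x => ((Real.toNNReal (φ x / δ) : ℝ≥0) : ℝ≥0∞) := rfl
  rw [h1, integral_withDensity_eq_integral_smul₀ hwae]
  refine integral_congr_ae ?_
  filter_upwards [ae_restrict_mem hKm] with y hy
  rw [NNReal.smul_def, Real.coe_toNNReal _ (div_nonneg (hφnn y hy) hδ0.le)]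

end Helpers

lemma uw_metronoid_convex (μ : Measure (EuclideanSpace ℝ (Fin n))) :
    Convex ℝ (metronoid μ) := by
  rintro z₁ ⟨f₁, h₁, hi₁, hs₁, hv₁, rfl⟩ z₂ ⟨f₂, h₂, hi₂, hs₂, hv₂, rfl⟩ a b ha hb hab
  have hvmix : (fun y => (a * f₁ y + b * f₂ y) • y) =
      fun y => a • (f₁ y • y) + b • (f₂ y • y) := by
    funext y; simp [add_smul, mul_smul]
  have hva : Integrable (fun y => a • (f₁ y • y)) μ := hv₁.smul a
  have hvb : Integrable (fun y => b • (f₂ y • y)) μ := hv₂.smul b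
  refine ⟨fun y => a * f₁ y + b * f₂ y, ?_, ?_, ?_, ?_, ?_⟩
  · intro y
    refine ⟨add_nonneg (mul_nonneg ha (h₁ y).1) (mul_nonneg hb (h₂ y).1), ?_⟩
    calc a * f₁ y + b * f₂ y ≤ a * 1 + b * 1 :=
          add_le_add (mul_le_mul_of_nonneg_left (h₁ y).2 ha)
            (mul_le_mul_of_nonneg_left (h₂ y).2 hb)
      _ = 1 := by rw [mul_one, mul_one, hab]
  · exact (hi₁.const_mul a).add (hi₂.const_mul b)
  · rw [integral_add (hi₁.const_mul a) (hi₂.const_mul b), integral_const_mul,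
      integral_const_mul, hs₁, hs₂, mul_one, mul_one, hab]
  · rw [hvmix]
    exact hva.add hvb
  · rw [hvmix, integral_add hva hvb, integral_smul, integral_smul]

lemma uw_cap_spec {K : Set (EuclideanSpace ℝ (Fin n))} {φ : EuclideanSpace ℝ (Fin n) → ℝ}
    {δ : ℝ} (hK : IsCompact K) (hφpos : ∀ x ∈ K, 0 < φ x) (hφcont : ContinuousOn φ K)
    (hδ0 : 0 < δ) (u : EuclideanSpace ℝ (Fin n)) (hu : u ≠ 0) (d : ℝ)
    (hd : (∫ y in K ∩ {y | d ≤ ⟪y, u⟫}, φ y) = δ) :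
    (δ⁻¹ • ∫ y in K ∩ {y | d ≤ ⟪y, u⟫}, φ y • y) ∈ ulamW K φ δ ∧
    (∀ z ∈ ulamW K φ δ,
      ⟪z, u⟫ ≤ δ⁻¹ * (∫ y in K ∩ {y | d ≤ ⟪y, u⟫}, ⟪u, y⟫ * φ y) ∧
      (⟪z, u⟫ = δ⁻¹ * (∫ y in K ∩ {y | d ≤ ⟪y, u⟫}, ⟪u, y⟫ * φ y) →
        z = δ⁻¹ • ∫ y in K ∩ {y | d ≤ ⟪y, u⟫}, φ y • y)) ∧
    ⟪(δ⁻¹ • ∫ y in K ∩ {y | d ≤ ⟪y, u⟫}, φ y • y), u⟫ =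
      δ⁻¹ * (∫ y in K ∩ {y | d ≤ ⟪y, u⟫}, ⟪u, y⟫ * φ y) := by
  classical
  set S : Set (EuclideanSpace ℝ (Fin n)) := {y | d ≤ ⟪y, u⟫} with hS_def
  have hSm : MeasurableSet S :=
    (isClosed_le continuous_const (continuous_id.inner continuous_const)).measurableSet
  have hKm : MeasurableSet K := hK.measurableSet
  set ν := (volume.restrict K).withDensity fun x => ENNReal.ofReal (φ x / δ) with hν_def
  have hφae : AEMeasurable φ (volume.restrict K) := hφcont.aemeasurable hKm
  have hφnn : ∀ x ∈ K, 0 ≤ φ x := fun x hx => (hφpos x hx).le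
  have hφInt : IntegrableOn φ K := hφcont.integrableOn_compact hK
  have hφyInt : IntegrableOn (fun y => φ y • y) K :=
    (hφcont.smul continuousOn_id).integrableOn_compact hK
  set m := δ⁻¹ • ∫ y in K ∩ S, φ y • y with hm_def
  set f₀ : EuclideanSpace ℝ (Fin n) → ℝ := S.indicator (fun _ => (1:ℝ)) with hf₀_def
  have hf₀01 : ∀ y, 0 ≤ f₀ y ∧ f₀ y ≤ 1 := by
    intro y; by_cases h : y ∈ S <;> simp [hf₀_def, h]
  -- integrability of f₀ w.r.t. ν
  have he1 : (fun y => (φ y / δ) • f₀ y) = S.indicator (fun y => φ y / δ) := by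
    funext y; by_cases h : y ∈ S <;> simp [hf₀_def, h]
  have hf₀Int : Integrable f₀ ν := by
    rw [hν_def, uw_integrable_iff hKm hφae hφnn hδ0]
    rw [IntegrableOn, he1]
    exact (hφInt.div_const δ).indicator hSm
  -- ∫ f₀ ∂ν = 1
  have hf₀One : (∫ y, f₀ y ∂ν) = 1 := by
    rw [hν_def, uw_integral_eq hKm hφae hφnn hδ0]
    rw [show (∫ y in K, (φ y / δ) • f₀ y) = ∫ y in K, S.indicator (fun y => φ y / δ) y by
      rw [he1]]
    rw [integral_indicator hSm, Measure.restrict_restrict hSm, Set.inter_comm,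
      integral_div, hd, div_self hδ0.ne']
  -- integrability of f₀ • y and its integral
  have he2 : (fun y => (φ y / δ) • (f₀ y • y)) =
      S.indicator (fun y => δ⁻¹ • (φ y • y)) := by
    funext y; by_cases h : y ∈ S
    · simp [hf₀_def, h, smul_smul, div_eq_inv_mul]
    · simp [hf₀_def, h]
  have hf₀yInt : Integrable (fun y => f₀ y • y) ν := by
    rw [hν_def, uw_integrable_iff hKm hφae hφnn hδ0]
    rw [IntegrableOn, he2]
    exact (hφyInt.smul δ⁻¹).indicator hSm
  have hf₀yVal : (∫ y, f₀ y • y ∂ν) = m := by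
    rw [hν_def, uw_integral_eq hKm hφae hφnn hδ0]
    rw [show (∫ y in K, (φ y / δ) • (f₀ y • y)) =
        ∫ y in K, S.indicator (fun y => δ⁻¹ • (φ y • y)) y by rw [he2]]
    rw [integral_indicator hSm, Measure.restrict_restrict hSm, Set.inter_comm,
      integral_smul, hm_def]
  have hmem : m ∈ ulamW K φ δ :=
    ⟨f₀, hf₀01, hf₀Int, hf₀One, hf₀yInt, hf₀yVal.symm⟩
  -- the support value
  have hφyC : IntegrableOn (fun y => φ y • y) (K ∩ S) :=
    hφyInt.mono_set inter_subset_left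
  have hm_inner : ⟪m, u⟫ = δ⁻¹ * (∫ y in K ∩ S, ⟪u, y⟫ * φ y) := by
    rw [hm_def, real_inner_comm, real_inner_smul_right, ← integral_inner hφyC u]
    congr 1
    refine integral_congr_ae (Filter.Eventually.of_forall fun y => ?_)
    simp [real_inner_smul_right, mul_comm, Finset.mul_sum, mul_left_comm]
  refine ⟨hmem, fun z hz => ?_, hm_inner⟩
  obtain ⟨f, hf01, hfInt, hfOne, hfyInt, rfl⟩ := hz
  have hzin : ⟪(∫ y, f y • y ∂ν), u⟫ = ∫ y, ⟪u, f y • y⟫ ∂ν := by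
    rw [real_inner_comm]; exact (integral_inner hfyInt u).symm
  have hmin : ⟪m, u⟫ = ∫ y, ⟪u, f₀ y • y⟫ ∂ν := by
    rw [← hf₀yVal, real_inner_comm]; exact (integral_inner hf₀yInt u).symm
  have hg₁ : Integrable (fun y => ⟪u, f y • y⟫) ν :=
    (innerSL ℝ u).integrable_comp hfyInt
  have hg₂ : Integrable (fun y => ⟪u, f₀ y • y⟫) ν :=
    (innerSL ℝ u).integrable_comp hf₀yInt
  have hAint : Integrable (fun y => ⟪u, f₀ y • y⟫ - ⟪u, f y • y⟫) ν := hg₂.sub hg₁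
  have hBint : Integrable (fun y => d * (f₀ y - f y)) ν :=
    (hf₀Int.sub hfInt).const_mul d
  have hnn : ∀ y, 0 ≤ (f₀ y - f y) * (⟪y, u⟫ - d) := by
    intro y; by_cases h : y ∈ S
    · have h1 : f₀ y = 1 := Set.indicator_of_mem h _
      have h2 : d ≤ ⟪y, u⟫ := h
      nlinarith [(hf01 y).2]
    · have h1 : f₀ y = 0 := Set.indicator_of_notMem h _
      have h2 : ⟪y, u⟫ < d := not_le.mp h
      nlinarith [(hf01 y).1]
  have hexp : (fun y => (f₀ y - f y) * (⟪y, u⟫ - d)) =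
      fun y => (⟪u, f₀ y • y⟫ - ⟪u, f y • y⟫) - d * (f₀ y - f y) := by
    funext y
    rw [real_inner_smul_right, real_inner_smul_right, real_inner_comm y u]
    ring
  have hIint : Integrable (fun y => (f₀ y - f y) * (⟪y, u⟫ - d)) ν := by
    rw [hexp]
    exact hAint.sub hBint
  have hIval : (∫ y, (f₀ y - f y) * (⟪y, u⟫ - d) ∂ν) =
      (∫ y, ⟪u, f₀ y • y⟫ ∂ν) - ∫ y, ⟪u, f y • y⟫ ∂ν := by
    rw [hexp, integral_sub hAint hBint, integral_sub hg₂ hg₁, integral_const_mul,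
      integral_sub hf₀Int hfInt, hf₀One, hfOne]
    ring
  have hI0 : 0 ≤ ∫ y, (f₀ y - f y) * (⟪y, u⟫ - d) ∂ν :=
    integral_nonneg hnn
  constructor
  · rw [← hm_inner, hzin, hmin]
    linarith [hIval ▸ hI0]
  · intro hEq
    rw [← hm_inner, hzin, hmin] at hEq
    have hIzero : (∫ y, (f₀ y - f y) * (⟪y, u⟫ - d) ∂ν) = 0 := by
      rw [hIval, hEq]; ring
    have hae0 : (fun y => (f₀ y - f y) * (⟪y, u⟫ - d)) =ᵐ[ν] 0 :=
      (integral_eq_zero_iff_of_nonneg hnn hIint).mp hIzero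
    have hνac : ν ≪ volume := by
      refine (withDensity_absolutelyContinuous _ _).trans ?_
      exact Measure.absolutelyContinuous_of_le Measure.restrict_le_self
    have hplane : ∀ᵐ y ∂ν, ⟪y, u⟫ ≠ d := by
      refine ae_iff.mpr ?_
      have h0 : ν {y : EuclideanSpace ℝ (Fin n) | ⟪y, u⟫ = d} = 0 :=
        hνac (uw_hyperplane_null u hu d)
      simpa [not_not] using h0
    have hfeq : (fun y => f y • y) =ᵐ[ν] (fun y => f₀ y • y) := by
      filter_upwards [hae0, hplane] with y h1 h2
      have h3 : f₀ y - f y = 0 := by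
        rcases mul_eq_zero.mp h1 with h | h
        · exact h
        · exact absurd (by linarith [sub_eq_zero.mp h] : ⟪y, u⟫ = d) h2
      have : f y = f₀ y := by linarith [h3]
      rw [this]
    rw [integral_congr_ae hfeq, hf₀yVal]

set_option maxHeartbeats 1000000 in
lemma uw_exists_d {K : Set (EuclideanSpace ℝ (Fin n))} {φ : EuclideanSpace ℝ (Fin n) → ℝ}
    {δ : ℝ} (hK : IsCompact K) (hφcont : ContinuousOn φ K)
    (hδ0 : 0 < δ) (hδ1 : δ < ∫ x in K, φ x) (u : EuclideanSpace ℝ (Fin n)) (hu : u ≠ 0) :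
    ∃ d : ℝ, (∫ y in K ∩ {y | d ≤ ⟪y, u⟫}, φ y) = δ := by
  classical
  have hKm : MeasurableSet K := hK.measurableSet
  have hφae : AEMeasurable φ (volume.restrict K) := hφcont.aemeasurable hKm
  have hSm : ∀ t : ℝ, MeasurableSet {y : EuclideanSpace ℝ (Fin n) | t ≤ ⟪y, u⟫} := fun t =>
    (isClosed_le continuous_const (continuous_id.inner continuous_const)).measurableSet
  set F : ℝ → ℝ := fun t => ∫ y in K ∩ {y | t ≤ ⟪y, u⟫}, φ y with hF_def
  have hFeq : ∀ t, F t = ∫ y in K, ({y : EuclideanSpace ℝ (Fin n) | t ≤ ⟪y, u⟫}.indicator φ) y := by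
    intro t
    rw [hF_def, integral_indicator (hSm t), Measure.restrict_restrict (hSm t), Set.inter_comm]
  have hφIntK : IntegrableOn φ K := hφcont.integrableOn_compact hK
  have hFc : Continuous F := by
    rw [continuous_iff_continuousAt]
    intro t₀
    have : Filter.Tendsto F (𝓝 t₀) (𝓝 (F t₀)) := by
      rw [Filter.tendsto_iff_seq_tendsto]
      intro ts hts
      have hnull : ∀ᵐ y ∂(volume.restrict K), ⟪y, u⟫ ≠ t₀ := by
        refine ae_restrict_of_ae (ae_iff.mpr ?_)
        simpa [not_not] using uw_hyperplane_null u hu t₀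
      have key : Filter.Tendsto
          (fun k => ∫ y in K, ({y : EuclideanSpace ℝ (Fin n) | ts k ≤ ⟪y, u⟫}.indicator φ) y)
          Filter.atTop (𝓝 (∫ y in K, ({y : EuclideanSpace ℝ (Fin n) | t₀ ≤ ⟪y, u⟫}.indicator φ) y)) := by
        refine tendsto_integral_of_dominated_convergence (fun y => ‖φ y‖)
          (fun k => (hφae.aestronglyMeasurable.indicator (hSm (ts k))))
          hφIntK.norm ?_ ?_
        · intro k
          exact Filter.Eventually.of_forall fun y => norm_indicator_le_norm_self φ y
        · filter_upwards [hnull] with y hy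
          rcases lt_or_gt_of_ne hy with h | h
          · have hev : ∀ᶠ k in Filter.atTop, ({y_1 : EuclideanSpace ℝ (Fin n) | ts k ≤ ⟪y_1, u⟫}.indicator φ) y = 0 := by
              filter_upwards [hts.eventually (eventually_gt_nhds h)] with k hk
              exact Set.indicator_of_notMem (by simpa using not_le.mpr hk) φ
            have h0 : ({y_1 : EuclideanSpace ℝ (Fin n) | t₀ ≤ ⟪y_1, u⟫}.indicator φ) y = 0 :=
              Set.indicator_of_notMem (by simpa using not_le.mpr h) φ
            rw [h0]
            exact Filter.Tendsto.congr' (by filter_upwards [hev] with k hk; exact hk.symm)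
              tendsto_const_nhds
          · have hev : ∀ᶠ k in Filter.atTop, ({y_1 : EuclideanSpace ℝ (Fin n) | ts k ≤ ⟪y_1, u⟫}.indicator φ) y = φ y := by
              filter_upwards [hts.eventually (eventually_lt_nhds h)] with k hk
              exact Set.indicator_of_mem (by simpa using hk.le) φ
            have h0 : ({y_1 : EuclideanSpace ℝ (Fin n) | t₀ ≤ ⟪y_1, u⟫}.indicator φ) y = φ y :=
              Set.indicator_of_mem (by simpa using h.le) φ
            rw [h0]
            exact Filter.Tendsto.congr' (by filter_upwards [hev] with k hk; exact hk.symm)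
              tendsto_const_nhds
      have : Filter.Tendsto (fun k => F (ts k)) Filter.atTop (𝓝 (F t₀)) := by
        rw [hFeq t₀]
        exact key.congr (fun k => (hFeq (ts k)).symm)
      exact this
    exact this
  -- K is nonempty
  have hKne : K.Nonempty := by
    by_contra h
    rw [Set.not_nonempty_iff_eq_empty] at h
    rw [h, setIntegral_empty] at hδ1
    linarith
  obtain ⟨R, hR⟩ := hK.isBounded.exists_norm_le
  have hR0 : 0 ≤ R := le_trans (norm_nonneg _) (hR _ hKne.choose_spec)
  set t₀ := -(R * ‖u‖ + 1) with ht₀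
  set t₁ := R * ‖u‖ + 1 with ht₁
  have hbound : ∀ y ∈ K, |⟪y, u⟫| ≤ R * ‖u‖ := by
    intro y hy
    refine le_trans (abs_real_inner_le_norm y u) ?_
    exact mul_le_mul_of_nonneg_right (hR y hy) (norm_nonneg u)
  have hF0 : F t₀ = ∫ x in K, φ x := by
    have hsub : K ∩ {y : EuclideanSpace ℝ (Fin n) | t₀ ≤ ⟪y, u⟫} = K := by
      refine Set.inter_eq_self_of_subset_left ?_
      intro y hy
      have := abs_le.mp (hbound y hy)
      simp only [Set.mem_setOf_eq, ht₀]
      linarith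
    simp only [hF_def]
    rw [hsub]
  have hF1 : F t₁ = 0 := by
    simp only [hF_def]
    have : K ∩ {y : EuclideanSpace ℝ (Fin n) | t₁ ≤ ⟪y, u⟫} = ∅ := by
      rw [Set.eq_empty_iff_forall_notMem]
      rintro y ⟨hy1, hy2⟩
      have := abs_le.mp (hbound y hy1)
      simp only [Set.mem_setOf_eq, ht₁] at hy2
      linarith
    rw [this, setIntegral_empty]
  have h01 : t₀ ≤ t₁ := by
    have : 0 ≤ R * ‖u‖ := mul_nonneg hR0 (norm_nonneg u)
    simp only [ht₀, ht₁]
    linarith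
  have hmem : δ ∈ Icc (F t₁) (F t₀) := by
    rw [hF0, hF1]
    exact ⟨hδ0.le, hδ1.le⟩
  obtain ⟨dd, _, hdd⟩ := intermediate_value_Icc' h01 hFc.continuousOn hmem
  exact ⟨dd, hdd⟩

/-- The weighted barycenter of the cap `K ∩ {y : ⟨y,θ⟩ ≥ d}` is the unique point of
`∂M_δ(K,φ)` maximizing `⟨·,θ⟩`; its support value is `(1/δ)∫_{K∩H⁺}⟨θ,y⟩φ(y)dy`;
and `M_δ(K,φ)` is strictly convex. -/
theorem stmt3 (n : ℕ) (K : Set (EuclideanSpace ℝ (Fin n)))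
    (hK : IsCompact K) (hKc : Convex ℝ K) (hKi : (interior K).Nonempty)
    (φ : EuclideanSpace ℝ (Fin n) → ℝ) (hφpos : ∀ x ∈ K, 0 < φ x)
    (hφcont : ContinuousOn φ K)
    (θ : EuclideanSpace ℝ (Fin n)) (hθ : ‖θ‖ = 1)
    (δ : ℝ) (hδ0 : 0 < δ) (hδ1 : δ < ∫ x in K, φ x)
    (d : ℝ) (hd : (∫ y in K ∩ {y | d ≤ ⟪y, θ⟫}, φ y) = δ) :
    (δ⁻¹ • ∫ y in K ∩ {y | d ≤ ⟪y, θ⟫}, φ y • y) ∈ ulamW K φ δ ∧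
    (∀ z ∈ ulamW K φ δ,
      ⟪z, θ⟫ ≤ δ⁻¹ * ∫ y in K ∩ {y | d ≤ ⟪y, θ⟫}, ⟪θ, y⟫ * φ y) ∧
    (∀ z ∈ ulamW K φ δ,
      ⟪z, θ⟫ = δ⁻¹ * (∫ y in K ∩ {y | d ≤ ⟪y, θ⟫}, ⟪θ, y⟫ * φ y) →
      z = δ⁻¹ • ∫ y in K ∩ {y | d ≤ ⟪y, θ⟫}, φ y • y) ∧
    StrictConvex ℝ (ulamW K φ δ) := by
  have huθ : θ ≠ 0 := by
    intro h; rw [h] at hθ; simp at hθ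
  obtain ⟨hmem, hspec, _⟩ := uw_cap_spec hK hφpos hφcont hδ0 θ huθ d hd
  refine ⟨hmem, fun z hz => (hspec z hz).1, fun z hz => (hspec z hz).2, ?_⟩
  -- Strict convexity
  set M := ulamW K φ δ with hM_def
  have hMc : Convex ℝ M := uw_metronoid_convex _
  have huniq : ∀ u : EuclideanSpace ℝ (Fin n), u ≠ 0 → ∀ x ∈ M, ∀ y ∈ M,
      (∀ w ∈ M, ⟪w, u⟫ ≤ ⟪x, u⟫) → (∀ w ∈ M, ⟪w, u⟫ ≤ ⟪y, u⟫) → x = y := by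
    intro u hu' x hx y hy hxmax hymax
    obtain ⟨d', hd'⟩ := uw_exists_d hK hφcont hδ0 hδ1 u hu'
    obtain ⟨hm', hsp', hval'⟩ := uw_cap_spec hK hφpos hφcont hδ0 u hu' d' hd'
    have hxc : x = δ⁻¹ • ∫ y in K ∩ {y | d' ≤ ⟪y, u⟫}, φ y • y := by
      refine (hsp' x hx).2 (le_antisymm (hsp' x hx).1 ?_)
      rw [← hval']
      exact hxmax _ hm'
    have hyc : y = δ⁻¹ • ∫ y in K ∩ {y | d' ≤ ⟪y, u⟫}, φ y • y := by
      refine (hsp' y hy).2 (le_antisymm (hsp' y hy).1 ?_)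
      rw [← hval']
      exact hymax _ hm'
    rw [hxc, hyc]
  intro x hx y hy hxy a b ha hb hab
  by_contra hznot
  by_cases hint : (interior M).Nonempty
  · obtain ⟨x0, hx0⟩ := hint
    obtain ⟨g, hg⟩ := geometric_hahn_banach_open_point (hMc.interior) isOpen_interior hznot
    set z := a • x + b • y with hz_def
    have hle : ∀ w ∈ M, g w ≤ g z := by
      intro w hw
      have hc : Continuous fun t : ℝ => g (w + t • (x0 - w)) :=
        g.continuous.comp (continuous_const.add (continuous_id.smul continuous_const))
      have htend : Filter.Tendsto (fun t : ℝ => g (w + t • (x0 - w))) (𝓝[>] (0:ℝ))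
          (𝓝 (g w)) := by
        have h0 := (hc.tendsto 0).mono_left (nhdsWithin_le_nhds (s := Set.Ioi (0:ℝ)))
        simpa using h0
      refine le_of_tendsto htend ?_
      filter_upwards [Ioc_mem_nhdsGT one_pos] with t ht
      exact (hg _ (hMc.add_smul_sub_mem_interior hw hx0 ht)).le
    set u := (InnerProductSpace.toDual ℝ (EuclideanSpace ℝ (Fin n))).symm g with hu_def
    have hgu : ∀ w, g w = ⟪w, u⟫ := by
      intro w
      have h1 : (InnerProductSpace.toDual ℝ (EuclideanSpace ℝ (Fin n))) u = g :=
        (InnerProductSpace.toDual ℝ (EuclideanSpace ℝ (Fin n))).apply_symm_apply g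
      rw [← h1, InnerProductSpace.toDual_apply_apply, real_inner_comm]
    have hune : u ≠ 0 := by
      intro h0
      have h1 := hg x0 hx0
      rw [hgu x0, hgu z, h0] at h1
      simp at h1
    have hzM : z ∈ M := hMc hx hy ha.le hb.le hab
    have h3 : g z = a * g x + b * g y := by
      rw [hz_def]
      simp [map_add, _root_.map_smul, smul_eq_mul]
    have h1 : g x ≤ g z := hle x hx
    have h2 : g y ≤ g z := hle y hy
    have key : a * g z + b * g z = g z := by rw [← add_mul, hab, one_mul]
    have ha2 : a * g x ≤ a * g z := mul_le_mul_of_nonneg_left h1 ha.le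
    have hb2 : b * g y ≤ b * g z := mul_le_mul_of_nonneg_left h2 hb.le
    have hgx : g x = g z :=
      le_antisymm h1 ((mul_le_mul_iff_right₀ ha).mp (by linarith))
    have hgy : g y = g z :=
      le_antisymm h2 ((mul_le_mul_iff_right₀ hb).mp (by linarith))
    refine hxy (huniq u hune x hx y hy ?_ ?_)
    · intro w hw
      rw [← hgu w, ← hgu x, hgx]
      exact hle w hw
    · intro w hw
      rw [← hgu w, ← hgu y, hgy]
      exact hle w hw
  · rw [Set.not_nonempty_iff_eq_empty] at hint
    have hspan : affineSpan ℝ M ≠ ⊤ := by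
      intro h
      have h2 := (hMc.interior_nonempty_iff_affineSpan_eq_top).mpr h
      rw [hint] at h2
      exact Set.not_nonempty_empty h2
    have hxspan : x ∈ affineSpan ℝ M := subset_affineSpan ℝ M hx
    have hdir : (affineSpan ℝ M).direction ≠ ⊤ := by
      intro h
      exact hspan ((AffineSubspace.direction_eq_top_iff_of_nonempty ⟨x, hxspan⟩).mp h)
    have horth : ((affineSpan ℝ M).direction)ᗮ ≠ ⊥ := by
      intro h
      exact hdir (Submodule.orthogonal_eq_bot_iff.mp h)
    obtain ⟨u, huV, hune⟩ := Submodule.exists_mem_ne_zero_of_ne_bot horth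
    have hconst : ∀ w ∈ M, ⟪w, u⟫ = ⟪x, u⟫ := by
      intro w hw
      have hsub : w -ᵥ x ∈ (affineSpan ℝ M).direction :=
        AffineSubspace.vsub_mem_direction (subset_affineSpan ℝ M hw) hxspan
      have h0 : ⟪w - x, u⟫ = 0 :=
        (Submodule.mem_orthogonal _ u).mp huV _ hsub
      rw [inner_sub_left] at h0
      linarith
    have hyx : ⟪y, u⟫ = ⟪x, u⟫ := hconst y hy
    refine hxy (huniq u hune x hx y hy (fun w hw => (hconst w hw).le)
      (fun w hw => by rw [hyx]; exact (hconst w hw).le))
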